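/- Let n : ℂ, n ≠ 0, and I₅, I₆, I₇, g, k, γ : ℝ with I₅ > 0, I₇ > 0, k ≠ 0, γ > 0. If n is not real and (conj n - n)(I₅ + g I₆ / |n|² - k² γ I₇ / |n|²) = 0, then |n|² = (k² γ I₇ - g I₆) / I₅, and consequently k² γ I₇ - g I₆ > 0. -/

import Mathlib

open Complex

/-- Non-real eigenvalue with surface tension: the second factor must vanish,
determining `|n|² = (k²γ I₇ - g I₆)/I₅`, which is therefore positive. -/
theorem modulus_of_nonreal_eigenvalue
    (n : ℂ) (I₅ I₆ I₇ g k γ : ℝ)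
    (hn : n ≠ 0) (hI₅ : 0 < I₅) (hI₇ : 0 < I₇) (hk : k ≠ 0) (hγ : 0 < γ)
    (hnim : n.im ≠ 0)
    (heq : ((starRingEnd ℂ) n - n) *
        ((I₅ : ℂ) + (g : ℂ) * I₆ / (Complex.normSq n : ℂ)
          - (k : ℂ) ^ 2 * γ * I₇ / (Complex.normSq n : ℂ)) = 0) :
    (Complex.normSq n : ℝ) = (k ^ 2 * γ * I₇ - g * I₆) / I₅ ∧
      0 < k ^ 2 * γ * I₇ - g * I₆ := by
  have hN : (0 : ℝ) < Complex.normSq n := Complex.normSq_pos.2 hn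
  have h1 : ((starRingEnd ℂ) n - n) ≠ 0 := by
    intro h
    apply hnim
    have := congrArg Complex.im h
    simp at this
    linarith [this]
  have h2 : ((I₅ : ℂ) + (g : ℂ) * I₆ / (Complex.normSq n : ℂ)
      - (k : ℂ) ^ 2 * γ * I₇ / (Complex.normSq n : ℂ)) = 0 :=
    (mul_eq_zero.1 heq).resolve_left h1
  have hNc : ((Complex.normSq n : ℝ) : ℂ) ≠ 0 := by
    exact_mod_cast hN.ne'
  have h3 : (I₅ : ℝ) + g * I₆ / Complex.normSq n - k ^ 2 * γ * I₇ / Complex.normSq n = 0 := by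
    have := congrArg Complex.re h2
    field_simp at this ⊢
    simp only [← Complex.ofReal_pow, Complex.ofReal_re] at this
    have h5 : ((I₅ + g * I₆ / Complex.normSq n - k ^ 2 * γ * I₇ / Complex.normSq n : ℝ) : ℂ) = 0 := by
      push_cast; exact h2
    have h6 := Complex.ofReal_eq_zero.1 h5
    have h7 : I₅ * Complex.normSq n + g * I₆ - k ^ 2 * γ * I₇ = (I₅ + g * I₆ / Complex.normSq n - k ^ 2 * γ * I₇ / Complex.normSq n) * Complex.normSq n := by
      rw [sub_mul, add_mul, div_mul_cancel₀ _ hN.ne', div_mul_cancel₀ _ hN.ne']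
    rw [h6, zero_mul] at h7
    linarith
  have key : Complex.normSq n * I₅ = k ^ 2 * γ * I₇ - g * I₆ := by
    field_simp at h3
    linarith
  constructor
  · field_simp [← key]; exact key
  · rw [← key]; positivity
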